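/- Let m ≥ 1 and N = 2m. Let F_N ∈ ℂ^{N×N} be the DFT matrix with entries (F_N)_{k,n} = exp(−2πi·k·n/N), let F_m ∈ ℂ^{m×m} be the DFT matrix of size m, let Ω ∈ ℂ^{m×m} be the diagonal matrix with diagonal entries Ω_{k,k} = exp(−2πi·k/N) for 0 ≤ k < m, and let P_N ∈ ℂ^{N×N} be the permutation matrix with (P_N x)_k = x_{2k} and (P_N x)_{m+k} = x_{2k+1} for 0 ≤ k < m. Then F_N equals the block matrix product [[I_m, Ω],[I_m, −Ω]] · [[F_m, 0],[0, F_m]] · P_N. -/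
import Mathlib


open Complex

/-- The DFT matrix of size `n`, with entries `exp(−2πi·k·j/n)`. -/
noncomputable def dftMatrix (n : ℕ) : Matrix (Fin n) (Fin n) ℂ :=
  Matrix.of fun k j => Complex.exp (-2 * Real.pi * Complex.I * (k : ℕ) * (j : ℕ) / n)

/-- The standard identification `Fin m ⊕ Fin m ≃ Fin (2m)`. -/
def sumEquiv (m : ℕ) : Fin m ⊕ Fin m ≃ Fin (2 * m) :=
  finSumFinEquiv.trans (finCongr (two_mul m).symm)

lemma sumEquiv_inl (m : ℕ) (a : Fin m) : ((sumEquiv m (Sum.inl a)) : ℕ) = a := rfl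
lemma sumEquiv_inr (m : ℕ) (a : Fin m) : ((sumEquiv m (Sum.inr a)) : ℕ) = m + a := rfl

lemma neg_exp' (z : ℂ) : -Complex.exp z = Complex.exp (Real.pi * Complex.I + z) := by
  rw [Complex.exp_add, Complex.exp_pi_mul_I]; ring

/-- **One step of the FFT factorization.**  For `N = 2m`,
`F_N = [[I, Ω],[I, −Ω]] · diag(F_m, F_m) · P_N`, where `Ω` is the diagonal matrix of twiddle
factors and `P_N` is the even–odd separation permutation matrix. -/
theorem dft_butterfly_step (m : ℕ) (hm : 1 ≤ m) :
    dftMatrix (2 * m) =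
      (Matrix.reindex (sumEquiv m) (sumEquiv m)
          (Matrix.fromBlocks 1
            (Matrix.diagonal fun k : Fin m =>
              Complex.exp (-2 * Real.pi * Complex.I * (k : ℕ) / (2 * m)))
            1
            (-(Matrix.diagonal fun k : Fin m =>
              Complex.exp (-2 * Real.pi * Complex.I * (k : ℕ) / (2 * m)))))) *
        (Matrix.reindex (sumEquiv m) (sumEquiv m)
          (Matrix.fromBlocks (dftMatrix m) 0 0 (dftMatrix m))) *
        (Matrix.of fun i j : Fin (2 * m) =>
          if (j : ℕ) = (if (i : ℕ) < m then 2 * (i : ℕ) else 2 * ((i : ℕ) - m) + 1)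
          then (1 : ℂ) else 0) := by
  have hmC : (m : ℂ) ≠ 0 := Nat.cast_ne_zero.2 (by omega)
  set e := sumEquiv m with he
  rw [Matrix.reindex_apply, Matrix.reindex_apply, Matrix.submatrix_mul_equiv,
    Matrix.fromBlocks_multiply]
  ext k n
  rw [Matrix.mul_apply, ← Equiv.sum_comp e, Fintype.sum_sum_type]
  obtain ⟨s, rfl⟩ : ∃ s, e s = k := ⟨e.symm k, e.apply_symm_apply k⟩
  simp only [Matrix.submatrix_apply, Equiv.symm_apply_apply, Matrix.of_apply, he,
    sumEquiv_inl, sumEquiv_inr, Fin.is_lt, if_true, Matrix.one_mul, Matrix.mul_zero,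
    Matrix.zero_mul, zero_add, add_zero, Matrix.neg_mul,
    add_lt_iff_neg_left, Nat.not_lt_zero, if_false, Nat.add_sub_cancel_left,
    Matrix.diagonal_mul, Matrix.neg_apply]
  have hn2 := n.isLt
  rcases Nat.even_or_odd (n : ℕ) with ⟨b, hb⟩ | ⟨b, hb⟩
  · -- n even, = b + b
    have hbm : b < m := by omega
    have h1 : ∀ x : Fin m, ((n : ℕ) = 2 * (x : ℕ)) = (x = (⟨b, hbm⟩ : Fin m)) := by
      intro x; rw [eq_iff_iff]; simp only [Fin.ext_iff]; omega
    have h2 : ∀ x : Fin m, ((n : ℕ) = 2 * (x : ℕ) + 1) = False := by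
      intro x; rw [eq_iff_iff, iff_false]; omega
    simp only [h1, h2, if_false, mul_zero, Finset.sum_const_zero, add_zero, mul_ite, mul_one,
      Finset.sum_ite_eq', Finset.mem_univ, if_true]
    rcases s with a | a
    · simp only [Matrix.fromBlocks_apply₁₁, dftMatrix, Matrix.of_apply, sumEquiv_inl]
      congr 1
      rw [hb]; push_cast; field_simp; ring
    · simp only [Matrix.fromBlocks_apply₂₁, dftMatrix, Matrix.of_apply, sumEquiv_inr]
      rw [Complex.exp_eq_exp_iff_exists_int]
      exact ⟨-b, by rw [hb]; push_cast; field_simp; ring⟩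
  · -- n odd, = 2b+1
    have hbm : b < m := by omega
    have h1 : ∀ x : Fin m, ((n : ℕ) = 2 * (x : ℕ)) = False := by
      intro x; rw [eq_iff_iff, iff_false]; omega
    have h2 : ∀ x : Fin m, ((n : ℕ) = 2 * (x : ℕ) + 1) = (x = (⟨b, hbm⟩ : Fin m)) := by
      intro x; rw [eq_iff_iff]; simp only [Fin.ext_iff]; omega
    simp only [h1, h2, if_false, mul_zero, Finset.sum_const_zero, zero_add, mul_ite, mul_one,
      Finset.sum_ite_eq', Finset.mem_univ, if_true]
    rcases s with a | a
    · simp only [Matrix.fromBlocks_apply₁₂, dftMatrix, Matrix.of_apply, sumEquiv_inl, Matrix.diagonal_mul]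
      rw [← Complex.exp_add]
      congr 1
      rw [hb]; push_cast; field_simp; ring
    · simp only [Matrix.fromBlocks_apply₂₂, dftMatrix, Matrix.of_apply, sumEquiv_inr, Matrix.neg_apply, Matrix.diagonal_mul]
      rw [← Complex.exp_add, neg_exp', Complex.exp_eq_exp_iff_exists_int]
      exact ⟨-(b + 1), by rw [hb]; push_cast; field_simp; ring⟩
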